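/- (d'Ocagne's identity for bicomplex Pell numbers) For all integers m and n, BP(m)·BP(n+1) − BP(m+1)·BP(n) = 12·(−1)^n·P(m−n)·(j + ij). -/

import Mathlib

open scoped TensorProduct

noncomputable def bi : ℂ ⊗[ℝ] ℂ := Complex.I ⊗ₜ[ℝ] 1
noncomputable def bj : ℂ ⊗[ℝ] ℂ := (1 : ℂ) ⊗ₜ[ℝ] Complex.I
noncomputable def bij : ℂ ⊗[ℝ] ℂ := Complex.I ⊗ₜ[ℝ] Complex.I

/-- The bicomplex Pell number `BP n = P n + P (n+1) i + P (n+2) j + P (n+3) ij`. -/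
noncomputable def BP (P : ℤ → ℤ) (n : ℤ) : ℂ ⊗[ℝ] ℂ :=
  (P n : ℝ) • (1 : ℂ ⊗[ℝ] ℂ) + (P (n + 1) : ℝ) • bi + (P (n + 2) : ℝ) • bj +
    (P (n + 3) : ℝ) • bij

lemma bi_bi : bi * bi = -1 := by
  simp only [bi, Algebra.TensorProduct.tmul_mul_tmul, Complex.I_mul_I, mul_one,
    Algebra.TensorProduct.one_def, TensorProduct.neg_tmul]

lemma bj_bj : bj * bj = -1 := by
  simp only [bj, Algebra.TensorProduct.tmul_mul_tmul, Complex.I_mul_I, mul_one,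
    Algebra.TensorProduct.one_def, TensorProduct.tmul_neg]

lemma bij_bij : bij * bij = 1 := by
  simp only [bij, Algebra.TensorProduct.tmul_mul_tmul, Complex.I_mul_I,
    Algebra.TensorProduct.one_def, TensorProduct.neg_tmul, TensorProduct.tmul_neg, neg_neg]

lemma bi_bj : bi * bj = bij := by
  simp only [bi, bj, bij, Algebra.TensorProduct.tmul_mul_tmul, mul_one, one_mul]

lemma bi_bij : bi * bij = -bj := by
  simp only [bi, bj, bij, Algebra.TensorProduct.tmul_mul_tmul, Complex.I_mul_I, one_mul,
    TensorProduct.neg_tmul]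

lemma bj_bij : bj * bij = -bi := by
  simp only [bi, bj, bij, Algebra.TensorProduct.tmul_mul_tmul, Complex.I_mul_I, one_mul,
    TensorProduct.tmul_neg]

lemma mul_expand (x1 x2 x3 x4 y1 y2 y3 y4 : ℝ) :
    (x1 • (1 : ℂ ⊗[ℝ] ℂ) + x2 • bi + x3 • bj + x4 • bij) *
      (y1 • (1 : ℂ ⊗[ℝ] ℂ) + y2 • bi + y3 • bj + y4 • bij) =
    (x1*y1 - x2*y2 - x3*y3 + x4*y4) • (1 : ℂ ⊗[ℝ] ℂ)
      + (x1*y2 + x2*y1 - x3*y4 - x4*y3) • bi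
      + (x1*y3 + x3*y1 - x2*y4 - x4*y2) • bj
      + (x1*y4 + x4*y1 + x2*y3 + x3*y2) • bij := by
  have hji : bj * bi = bij := by rw [mul_comm, bi_bj]
  have hiji : bij * bi = -bj := by rw [mul_comm, bi_bij]
  have hijj : bij * bj = -bi := by rw [mul_comm, bj_bij]
  simp only [add_mul, mul_add, smul_mul_smul_comm, bi_bi, bj_bj, bij_bij, bi_bj, bi_bij,
    bj_bij, hji, hiji, hijj, one_mul, mul_one, smul_neg]
  module

lemma dOc (P : ℤ → ℤ) (hP : ∀ n : ℤ, P (n + 2) = 2 * P (n + 1) + P n)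
    (hP0 : P 0 = 0) (hP1 : P 1 = 1) :
    ∀ n m : ℤ, (P m : ℝ) * P (n + 1) - P (m + 1) * P n = (-1 : ℝ) ^ n * P (m - n) := by
  intro n
  induction n using Int.induction_on with
  | zero =>
    intro m
    norm_num [hP0, hP1]
  | succ k ih =>
    intro m
    rw [show ((k:ℤ) + 1) + 1 = (k:ℤ) + 2 by ring]
    have h2 : (P ((k:ℤ) + 2) : ℝ) = 2 * P ((k:ℤ) + 1) + P (k:ℤ) := by exact_mod_cast hP k
    have h3 : (P (m + 1) : ℝ) = 2 * P m + P (m - 1) := by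
      have h := hP (m - 1)
      rw [show m - 1 + 2 = m + 1 by ring, show m - 1 + 1 = m by ring] at h
      exact_mod_cast h
    have h1 := ih (m - 1)
    rw [show m - 1 + 1 = m by ring] at h1
    rw [h2, h3, zpow_add_one₀ (by norm_num : (-1:ℝ) ≠ 0),
      show m - ((k:ℤ) + 1) = m - 1 - (k:ℤ) by ring]
    linear_combination -h1
  | pred k ih =>
    intro m
    rw [show -(k:ℤ) - 1 + 1 = -(k:ℤ) by ring]
    have h2 : (P (-(k:ℤ) + 1) : ℝ) = 2 * P (-(k:ℤ)) + P (-(k:ℤ) - 1) := by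
      have h := hP (-(k:ℤ) - 1)
      rw [show -(k:ℤ) - 1 + 2 = -(k:ℤ) + 1 by ring, show -(k:ℤ) - 1 + 1 = -(k:ℤ) by ring] at h
      exact_mod_cast h
    have h3 : (P (m + 2) : ℝ) = 2 * P (m + 1) + P m := by exact_mod_cast hP m
    have hs := zpow_add_one₀ (by norm_num : (-1:ℝ) ≠ 0) (-(k:ℤ) - 1)
    rw [show -(k:ℤ) - 1 + 1 = -(k:ℤ) by ring] at hs
    have h1 := ih (m + 1)
    rw [show m + 1 + 1 = m + 2 by ring,
      show m + 1 - -(k:ℤ) = m - (-(k:ℤ) - 1) by ring] at h1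
    rw [h2, h3, hs] at h1
    linear_combination -h1

theorem bicomplexPell_dOcagne (P : ℤ → ℤ)
    (hP : ∀ n : ℤ, P (n + 2) = 2 * P (n + 1) + P n) (hP0 : P 0 = 0) (hP1 : P 1 = 1)
    (m n : ℤ) :
    BP P m * BP P (n + 1) - BP P (m + 1) * BP P n =
      (12 * (-1 : ℝ) ^ n * (P (m - n) : ℝ)) • (bj + bij) := by
  have d00 := dOc P hP hP0 hP1 n m
  have ea2 : (P (m + 2) : ℝ) = 2 * P (m + 1) + P m := by exact_mod_cast hP m
  have ea3 : (P (m + 3) : ℝ) = 2 * P (m + 2) + P (m + 1) := by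
    have h := hP (m + 1)
    rw [show m + 1 + 2 = m + 3 by ring, show m + 1 + 1 = m + 2 by ring] at h
    exact_mod_cast h
  have ea4 : (P (m + 4) : ℝ) = 2 * P (m + 3) + P (m + 2) := by
    have h := hP (m + 2)
    rw [show m + 2 + 2 = m + 4 by ring, show m + 2 + 1 = m + 3 by ring] at h
    exact_mod_cast h
  have eb2 : (P (n + 2) : ℝ) = 2 * P (n + 1) + P n := by exact_mod_cast hP n
  have eb3 : (P (n + 3) : ℝ) = 2 * P (n + 2) + P (n + 1) := by
    have h := hP (n + 1)
    rw [show n + 1 + 2 = n + 3 by ring, show n + 1 + 1 = n + 2 by ring] at h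
    exact_mod_cast h
  have eb4 : (P (n + 4) : ℝ) = 2 * P (n + 3) + P (n + 2) := by
    have h := hP (n + 2)
    rw [show n + 2 + 2 = n + 4 by ring, show n + 2 + 1 = n + 3 by ring] at h
    exact_mod_cast h
  simp only [BP]
  rw [show n + 1 + 1 = n + 2 by ring, show n + 1 + 2 = n + 3 by ring,
    show n + 1 + 3 = n + 4 by ring, show m + 1 + 1 = m + 2 by ring,
    show m + 1 + 2 = m + 3 by ring, show m + 1 + 3 = m + 4 by ring]
  rw [mul_expand, mul_expand, smul_add]
  match_scalars
  · simp only [ea4, ea3, ea2, eb4, eb3, eb2]; ring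
  · simp only [ea4, ea3, ea2, eb4, eb3, eb2]; ring
  · simp only [ea4, ea3, ea2, eb4, eb3, eb2]; linear_combination 12 * d00
  · simp only [ea4, ea3, ea2, eb4, eb3, eb2]; linear_combination 12 * d00
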